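/- Let c ∈ [0,1), f : ℝ → ℝ continuous with t·f(t) ≥ 0 for all t, and suppose there exist t₀ > 0 and a ≤ 1 with |f(t)| ≤ a|t| for all |t| ≥ t₀. Then every nonoscillatory solution (x_n) of x_{n+1} = c·x_n + f(x_n − x_{n−1}) satisfies x_n·(x_{n+1} − x_n) < 0 eventually. -/

import Mathlib

open Filter Set Topology

lemma pos_case (c a t₀ : ℝ) (hc0 : 0 ≤ c) (hc1 : c < 1) (f : ℝ → ℝ)
    (hf : Continuous f) (hsign : ∀ t : ℝ, 0 ≤ t * f t)
    (ht₀ : 0 < t₀) (ha1 : a ≤ 1)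
    (hfb : ∀ t : ℝ, t₀ ≤ |t| → |f t| ≤ a * |t|) (x : ℕ → ℝ)
    (hx : ∀ n : ℕ, 1 ≤ n → x (n + 1) = c * x n + f (x n - x (n - 1)))
    (N : ℕ) (hpos : ∀ n : ℕ, N ≤ n → 0 < x n) :
    ∃ N' : ℕ, ∀ n : ℕ, N' ≤ n → x (n + 1) - x n < 0 := by
  -- sign facts
  have hposf : ∀ t : ℝ, 0 < t → 0 ≤ f t := by
    intro t ht
    have := hsign t
    nlinarith
  have hf0 : f 0 = 0 := by
    have h1 : 0 ≤ f 0 := by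
      have htend : Tendsto f (nhdsWithin 0 (Set.Ioi (0:ℝ))) (nhds (f 0)) :=
        (hf.tendsto 0).mono_left nhdsWithin_le_nhds
      refine ge_of_tendsto htend ?_
      exact eventually_nhdsWithin_of_forall (fun t ht => hposf t ht)
    have h2 : f 0 ≤ 0 := by
      have htend : Tendsto f (nhdsWithin 0 (Set.Iio (0:ℝ))) (nhds (f 0)) :=
        (hf.tendsto 0).mono_left nhdsWithin_le_nhds
      refine le_of_tendsto htend ?_
      refine eventually_nhdsWithin_of_forall (fun t ht => ?_)
      have := hsign t
      have ht' : t < 0 := ht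
      nlinarith
    linarith
  have hnegf : ∀ t : ℝ, t ≤ 0 → f t ≤ 0 := by
    intro t ht
    rcases lt_or_eq_of_le ht with h | h
    · have := hsign t; nlinarith
    · rw [h, hf0]
  by_contra hcon
  push_neg at hcon
  -- from hcon: for every N', some n ≥ N' has 0 ≤ x (n+1) - x n
  have hcon' : ∀ m : ℕ, ∃ n : ℕ, m ≤ n ∧ N ≤ n ∧ 0 ≤ x (n + 1) - x n := by
    intro m
    obtain ⟨n, hn, hd⟩ := hcon (max m N)
    exact ⟨n, le_trans (le_max_left _ _) hn, le_trans (le_max_right _ _) hn, hd⟩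
  -- single backward step
  have hstep : ∀ n : ℕ, N + 1 ≤ n → 0 ≤ x (n + 1) - x n → 0 < x n - x (n - 1) := by
    intro n hn hd
    by_contra h
    push_neg at h
    have hxn := hx n (by omega)
    have hfneg : f (x n - x (n - 1)) ≤ 0 := hnegf _ h
    have hxpos : 0 < x n := hpos n (by omega)
    rw [hxn] at hd
    nlinarith
  -- backward chain
  have hchain : ∀ m : ℕ, ∀ k : ℕ, N + 1 ≤ k → 0 ≤ x (k + 1 + m) - x (k + m) →
      0 < x k - x (k - 1) := by
    intro m
    induction m with
    | zero => intro k hk hd; exact hstep k hk (by simpa using hd)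
    | succ m ih =>
        intro k hk hd
        have e1 : k + 1 + (m + 1) = (k + 1) + 1 + m := by omega
        have e2 : k + (m + 1) = (k + 1) + m := by omega
        rw [e1, e2] at hd
        have h1 : 0 < x (k + 1) - x (k + 1 - 1) := ih (k + 1) (by omega) hd
        have h1' : 0 ≤ x (k + 1) - x k := by
          have : k + 1 - 1 = k := by omega
          rw [this] at h1; linarith
        exact hstep k hk h1'
  -- x strictly increasing from N
  have hinc : ∀ k : ℕ, N + 1 ≤ k → 0 < x k - x (k - 1) := by
    intro k hk
    obtain ⟨n, hn1, _, hd⟩ := hcon' (k + 1)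
    have e1 : k + 1 + (n - k) = n + 1 := by omega
    have e2 : k + (n - k) = n := by omega
    exact hchain (n - k) k hk (by rw [e1, e2]; exact hd)
  have hstep' : ∀ k : ℕ, N ≤ k → x k < x (k + 1) := by
    intro k hk
    have := hinc (k + 1) (by omega)
    have e : k + 1 - 1 = k := by omega
    rw [e] at this
    linarith
  have hmono : ∀ j k : ℕ, N ≤ j → j ≤ k → x j ≤ x k := by
    intro j k hj hjk
    induction k with
    | zero =>
        have : j = 0 := by omega
        rw [this]
    | succ k ih =>
        rcases Nat.lt_or_ge j (k + 1) with h | h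
        · have hjk' : j ≤ k := by omega
          have := ih hjk'
          have h2 := hstep' k (by omega)
          linarith
        · have : j = k + 1 := by omega
          rw [this]
  -- bound for f on [0, t₀]
  obtain ⟨tM, htM, hMmax'⟩ := isCompact_Icc.exists_isMaxOn (Set.nonempty_Icc.2 ht₀.le)
    hf.continuousOn
  have hMmax : ∀ s ∈ Set.Icc (0:ℝ) t₀, f s ≤ f tM := fun s hs => hMmax' hs
  set M : ℝ := max (f tM) 0 with hMdef
  have hM0 : 0 ≤ M := le_max_right _ _
  have hMbd : ∀ s : ℝ, s ∈ Set.Icc 0 t₀ → f s ≤ M := fun s hs =>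
    le_trans (hMmax s hs) (le_max_left _ _)
  have fbound : ∀ d : ℝ, 0 < d → f d ≤ d + M := by
    intro d hd
    rcases le_or_gt d t₀ with h | h
    · have := hMbd d ⟨hd.le, h⟩; linarith
    · have habs : |f d| ≤ a * |d| := hfb d (by rw [abs_of_pos hd]; linarith)
      rw [abs_of_pos hd] at habs
      have h1 : f d ≤ |f d| := le_abs_self _
      nlinarith
  by_cases hA : ∃ m : ℕ, N ≤ m ∧ M + 1 ≤ (1 - c) * x m
  · -- Case A: x grows past the threshold; differences decrease by ≥ 1 each step
    obtain ⟨m, hm, hmth⟩ := hA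
    have key : ∀ k : ℕ, x (m + k + 1) - x (m + k) ≤ (x (m + 1) - x m) - k := by
      intro k
      induction k with
      | zero => simp
      | succ k ih =>
          have hn1 : (1:ℕ) ≤ m + k + 1 := by omega
          have hxn := hx (m + k + 1) hn1
          have e : m + k + 1 - 1 = m + k := by omega
          rw [e] at hxn
          have hdpos : 0 < x (m + k + 1) - x (m + k) := by
            have := hinc (m + k + 1) (by omega)
            have e2 : m + k + 1 - 1 = m + k := by omega
            rw [e2] at this; exact this
          have hfb' : f (x (m + k + 1) - x (m + k)) ≤ (x (m + k + 1) - x (m + k)) + M :=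
            fbound _ hdpos
          have hxm : x m ≤ x (m + k + 1) := hmono m (m + k + 1) hm (by omega)
          have e3 : m + (k + 1) + 1 = (m + k + 1) + 1 := by omega
          have e4 : m + (k + 1) = m + k + 1 := by omega
          rw [e3, e4, hxn]
          push_cast
          nlinarith
    obtain ⟨k, hk⟩ := exists_nat_gt (x (m + 1) - x m)
    have h1 := key k
    have h2 : 0 < x (m + k + 1) - x (m + k) := by
      have := hinc (m + k + 1) (by omega)
      have e : m + k + 1 - 1 = m + k := by omega
      rw [e] at this; exact this
    linarith
  · -- Case B: x is bounded, hence converges; differences → 0, contradiction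
    push_neg at hA
    set y : ℕ → ℝ := fun k => x (N + k) with hydef
    have hymono : Monotone y := by
      apply monotone_nat_of_le_succ
      intro k
      have := hstep' (N + k) (by omega)
      exact this.le
    have hybdd : BddAbove (Set.range y) := by
      refine ⟨(M + 1) / (1 - c), ?_⟩
      rintro _ ⟨k, rfl⟩
      have h := hA (N + k) (by omega)
      have h1c : 0 < 1 - c := by linarith
      rw [le_div_iff₀ h1c]
      simp only [hydef]
      nlinarith
    have hL : Tendsto y atTop (nhds (⨆ k, y k)) := tendsto_atTop_ciSup hymono hybdd
    have hd : Tendsto (fun k => y (k + 1) - y k) atTop (nhds 0) := by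
      have h1 : Tendsto (fun k => y (k + 1)) atTop (nhds (⨆ k, y k)) :=
        hL.comp (tendsto_add_atTop_nat 1)
      simpa using h1.sub hL
    have hfd : Tendsto (fun k => f (y (k + 1) - y k)) atTop (nhds 0) := by
      have := (hf.tendsto 0).comp hd
      simpa [hf0, Function.comp_def] using this
    have hε : 0 < (1 - c) * x N := by
      have := hpos N le_rfl
      nlinarith
    have hev : ∀ᶠ k in atTop, f (y (k + 1) - y k) < (1 - c) * x N :=
      hfd.eventually_lt_const hε
    obtain ⟨k, hk⟩ := hev.exists
    -- contradiction at n = N + k + 1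
    have hn1 : (1:ℕ) ≤ N + k + 1 := by omega
    have hxn := hx (N + k + 1) hn1
    have e : N + k + 1 - 1 = N + k := by omega
    rw [e] at hxn
    have hyk : y (k + 1) - y k = x (N + k + 1) - x (N + k) := rfl
    rw [hyk] at hk
    have hxmon : x N ≤ x (N + k + 1) := hmono N (N + k + 1) le_rfl (by omega)
    have hlt : x (N + k + 1 + 1) - x (N + k + 1) < 0 := by
      rw [hxn]
      nlinarith
    have := hinc (N + k + 1 + 1) (by omega)
    have e2 : N + k + 1 + 1 - 1 = N + k + 1 := by omega
    rw [e2] at this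
    linarith

theorem stmt12 (c a t₀ : ℝ) (hc0 : 0 ≤ c) (hc1 : c < 1) (f : ℝ → ℝ)
    (hf : Continuous f) (hsign : ∀ t : ℝ, 0 ≤ t * f t)
    (ht₀ : 0 < t₀) (ha1 : a ≤ 1)
    (hfb : ∀ t : ℝ, t₀ ≤ |t| → |f t| ≤ a * |t|) (x : ℕ → ℝ)
    (hx : ∀ n : ℕ, 1 ≤ n → x (n + 1) = c * x n + f (x n - x (n - 1)))
    (hnonosc : (∃ N : ℕ, ∀ n : ℕ, N ≤ n → 0 < x n) ∨
      (∃ N : ℕ, ∀ n : ℕ, N ≤ n → x n < 0)) :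
    ∃ N : ℕ, ∀ n : ℕ, N ≤ n → x n * (x (n + 1) - x n) < 0 := by
  rcases hnonosc with ⟨N, hpos⟩ | ⟨N, hneg⟩
  · obtain ⟨N', hN'⟩ := pos_case c a t₀ hc0 hc1 f hf hsign ht₀ ha1 hfb x hx N hpos
    refine ⟨max N N', fun n hn => ?_⟩
    have h1 : 0 < x n := hpos n (le_trans (le_max_left _ _) hn)
    have h2 : x (n + 1) - x n < 0 := hN' n (le_trans (le_max_right _ _) hn)
    exact mul_neg_of_pos_of_neg h1 h2
  · -- apply pos_case to y = -x with g t = -f(-t)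
    set g : ℝ → ℝ := fun t => -f (-t) with hgdef
    have hg : Continuous g := (hf.comp continuous_neg).neg
    have hgsign : ∀ t : ℝ, 0 ≤ t * g t := by
      intro t
      have := hsign (-t)
      simp only [hgdef]
      nlinarith
    have hgb : ∀ t : ℝ, t₀ ≤ |t| → |g t| ≤ a * |t| := by
      intro t ht
      have := hfb (-t) (by rwa [abs_neg])
      simpa [hgdef, abs_neg] using this
    set y : ℕ → ℝ := fun n => -x n with hydef
    have hy : ∀ n : ℕ, 1 ≤ n → y (n + 1) = c * y n + g (y n - y (n - 1)) := by
      intro n hn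
      have := hx n hn
      simp only [hydef, hgdef]
      rw [this]
      ring_nf
    have hypos : ∀ n : ℕ, N ≤ n → 0 < y n := by
      intro n hn
      simp only [hydef]
      linarith [hneg n hn]
    obtain ⟨N', hN'⟩ := pos_case c a t₀ hc0 hc1 g hg hgsign ht₀ ha1 hgb y hy N hypos
    refine ⟨max N N', fun n hn => ?_⟩
    have h1 : x n < 0 := hneg n (le_trans (le_max_left _ _) hn)
    have h2 : y (n + 1) - y n < 0 := hN' n (le_trans (le_max_right _ _) hn)
    simp only [hydef] at h2
    nlinarith
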